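/- (From Example 2.2 of the paper.) Let M = ℝ² ∖ {(1, t) : 1 ≤ t ≤ 2}, the Minkowski plane with a closed vertical segment removed. Then d_M((0,0), (0,4)) = 4. -/

import Mathlib

open Set
open scoped ENNReal

/-- A vector of the Minkowski plane (first coordinate space, second coordinate time)
is future-directed timelike. -/
def FDTimelike (v : ℝ × ℝ) : Prop := |v.1| < v.2

/-- A future-directed timelike curve in `M ⊆ ℝ²` from `p` to `q`: a piecewise `C¹`
map `γ : [0,1] → M` all of whose one-sided derivatives are future-directed timelike. -/
def IsTimelikeCurveIn (M : Set (ℝ × ℝ)) (γ : ℝ → ℝ × ℝ) (p q : ℝ × ℝ) : Prop :=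
  γ 0 = p ∧ γ 1 = q ∧ (∀ s ∈ Set.Icc (0 : ℝ) 1, γ s ∈ M) ∧
  ∃ (m : ℕ) (t : ℕ → ℝ), 0 < m ∧ t 0 = 0 ∧ t m = 1 ∧ (∀ j < m, t j < t (j + 1)) ∧
    ∀ j < m,
      ContDiffOn ℝ 1 γ (Set.Icc (t j) (t (j + 1))) ∧
      ∀ s ∈ Set.Icc (t j) (t (j + 1)),
        FDTimelike (derivWithin γ (Set.Icc (t j) (t (j + 1))) s)

/-- The Lorentzian length of a curve in the Minkowski plane. -/
noncomputable def Llen (γ : ℝ → ℝ × ℝ) : ℝ :=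
  ∫ s in (0 : ℝ)..1, Real.sqrt ((deriv γ s).2 ^ 2 - (deriv γ s).1 ^ 2)

/-- The Lorentzian distance of `M ⊆ ℝ²`. -/
noncomputable def LorDist (M : Set (ℝ × ℝ)) (p q : ℝ × ℝ) : ℝ≥0∞ :=
  ⨆ (γ : ℝ → ℝ × ℝ) (_ : IsTimelikeCurveIn M γ p q), ENNReal.ofReal (Llen γ)


/-- The Minkowski plane with the closed segment `{1} × [1,2]` removed. -/
def Mslit : Set (ℝ × ℝ) := {p : ℝ × ℝ | ¬ (p.1 = 1 ∧ 1 ≤ p.2 ∧ p.2 ≤ 2)}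

lemma llen_le {M : Set (ℝ × ℝ)} {γ : ℝ → ℝ × ℝ} {p q : ℝ × ℝ}
    (h : IsTimelikeCurveIn M γ p q) : Llen γ ≤ q.2 - p.2 := by
  obtain ⟨h0, h1, -, m, t, hm, ht0, htm, hmono, hpc⟩ := h
  set F : ℝ → ℝ := fun s => Real.sqrt ((deriv γ s).2 ^ 2 - (deriv γ s).1 ^ 2) with hF
  have key : ∀ j < m, IntervalIntegrable F MeasureTheory.volume (t j) (t (j + 1)) ∧
      (∫ s in (t j)..(t (j + 1)), F s) ≤ (γ (t (j + 1))).2 - (γ (t j)).2 := by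
    intro j hj
    set a := t j
    set b := t (j + 1)
    have hab : a < b := hmono j hj
    obtain ⟨hc, htl⟩ := hpc j hj
    set g : ℝ → ℝ × ℝ := derivWithin γ (Set.Icc a b) with hg
    have hud : UniqueDiffOn ℝ (Set.Icc a b) := uniqueDiffOn_Icc hab
    have hgc : ContinuousOn g (Set.Icc a b) := hc.continuousOn_derivWithin hud le_rfl
    have hder : ∀ s ∈ Set.Ioo a b, HasDerivAt γ (g s) s := by
      intro s hs
      exact ((hc.differentiableOn one_ne_zero s (Ioo_subset_Icc_self hs)).hasDerivWithinAt).hasDerivAt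
        (Icc_mem_nhds hs.1 hs.2)
    set G : ℝ → ℝ := fun s => Real.sqrt ((g s).2 ^ 2 - (g s).1 ^ 2) with hG
    have hG2c : ContinuousOn (fun s => (g s).2) (Set.Icc a b) :=
      continuous_snd.comp_continuousOn hgc
    have hG1c : ContinuousOn (fun s => (g s).1) (Set.Icc a b) :=
      continuous_fst.comp_continuousOn hgc
    have hGc : ContinuousOn G (Set.Icc a b) :=
      Real.continuous_sqrt.comp_continuousOn ((hG2c.pow 2).sub (hG1c.pow 2))
    have hGint : IntervalIntegrable G MeasureTheory.volume a b := by
      apply ContinuousOn.intervalIntegrable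
      rwa [Set.uIcc_of_le hab.le]
    have hG2int : IntervalIntegrable (fun s => (g s).2) MeasureTheory.volume a b := by
      apply ContinuousOn.intervalIntegrable
      rwa [Set.uIcc_of_le hab.le]
    have hneb : ∀ᵐ x : ℝ, x ≠ b := by
      rw [MeasureTheory.ae_iff]
      simp only [not_not, Set.setOf_eq_eq_singleton]
      exact Real.volume_singleton
    have haeq : ∀ᵐ x : ℝ, x ∈ Set.uIoc a b → F x = G x := by
      filter_upwards [hneb] with x hx hxm
      rw [Set.uIoc_of_le hab.le] at hxm
      have hxIoo : x ∈ Set.Ioo a b := ⟨hxm.1, lt_of_le_of_ne hxm.2 hx⟩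
      simp only [hF, hG, (hder x hxIoo).deriv]
    have hFG : (∫ s in a..b, F s) = ∫ s in a..b, G s :=
      intervalIntegral.integral_congr_ae haeq
    have hFint : IntervalIntegrable F MeasureTheory.volume a b := by
      rw [intervalIntegrable_iff_integrableOn_Ioc_of_le hab.le]
      rw [intervalIntegrable_iff_integrableOn_Ioc_of_le hab.le] at hGint
      apply hGint.congr
      have h1 : ∀ᵐ x ∂(MeasureTheory.volume.restrict (Set.Ioc a b)), x ∈ Set.Ioc a b :=
        MeasureTheory.ae_restrict_mem measurableSet_Ioc
      filter_upwards [h1, MeasureTheory.ae_restrict_of_ae hneb] with x hx1 hx2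
      have hxIoo : x ∈ Set.Ioo a b := ⟨hx1.1, lt_of_le_of_ne hx1.2 hx2⟩
      simp only [hF, hG, (hder x hxIoo).deriv]
    refine ⟨hFint, ?_⟩
    rw [hFG]
    have hFTC : (∫ s in a..b, (g s).2) = (γ b).2 - (γ a).2 := by
      apply intervalIntegral.integral_eq_sub_of_hasDeriv_right_of_le hab.le
        (continuous_snd.comp_continuousOn (hc.continuousOn)) _ hG2int
      intro x hx
      have h2 : HasDerivAt (fun s => (γ s).2) ((g x).2) x := by
        have := (hasFDerivAt_snd.comp x (hder x hx).hasFDerivAt).hasDerivAt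
        simp at this; exact this
      exact h2.hasDerivWithinAt
    rw [← hFTC]
    apply intervalIntegral.integral_mono_on hab.le hGint hG2int
    intro x hx
    have h2 : |(g x).1| < (g x).2 := htl x hx
    have h1 : (0:ℝ) ≤ (g x).2 := le_trans (abs_nonneg _) h2.le
    calc Real.sqrt ((g x).2 ^ 2 - (g x).1 ^ 2) ≤ Real.sqrt ((g x).2 ^ 2) := by
          apply Real.sqrt_le_sqrt; nlinarith [sq_nonneg (g x).1]
      _ = (g x).2 := by rw [Real.sqrt_sq h1]
  have hsum : (∑ j ∈ Finset.range m, ∫ s in (t j)..(t (j + 1)), F s) =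
      ∫ s in (t 0)..(t m), F s :=
    intervalIntegral.sum_integral_adjacent_intervals (fun k hk => (key k hk).1)
  have : Llen γ = ∫ s in (t 0)..(t m), F s := by rw [ht0, htm]; rfl
  rw [this, ← hsum]
  calc (∑ j ∈ Finset.range m, ∫ s in (t j)..(t (j + 1)), F s)
      ≤ ∑ j ∈ Finset.range m, ((γ (t (j + 1))).2 - (γ (t j)).2) :=
        Finset.sum_le_sum (fun j hj => (key j (Finset.mem_range.mp hj)).2)
    _ = (γ (t m)).2 - (γ (t 0)).2 := Finset.sum_range_sub (fun j => (γ (t j)).2) m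
    _ = q.2 - p.2 := by rw [ht0, htm, h0, h1]

/-- In the slit Minkowski plane of Example 2.2, `d((0,0),(0,4)) = 4`. -/
theorem stmt_8 : LorDist Mslit ((0 : ℝ), (0 : ℝ)) ((0 : ℝ), (4 : ℝ)) = 4 := by
  apply le_antisymm
  · apply iSup_le; intro γ; apply iSup_le; intro hγ
    have := llen_le hγ
    simp only at this
    calc ENNReal.ofReal (Llen γ) ≤ ENNReal.ofReal 4 := by
          apply ENNReal.ofReal_le_ofReal; linarith
      _ = 4 := by norm_num
  · set γ₀ : ℝ → ℝ × ℝ := fun s => ((0:ℝ), 4 * s) with hγ₀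
    have hd : ∀ s : ℝ, HasDerivAt γ₀ ((0:ℝ), (4:ℝ)) s := by
      intro s
      have h2 : HasDerivAt (fun x : ℝ => 4 * x) 4 s := by
        simpa using (hasDerivAt_id s).const_mul (4:ℝ)
      exact HasDerivAt.prodMk (hasDerivAt_const s (0:ℝ)) h2
    have hcurve : IsTimelikeCurveIn Mslit γ₀ ((0:ℝ), (0:ℝ)) ((0:ℝ), (4:ℝ)) := by
      refine ⟨by simp [hγ₀], by simp [hγ₀], ?_, 1, fun j => (j : ℝ), one_pos, by simp, by simp,
        ?_, ?_⟩
      · intro s _; simp [hγ₀, Mslit]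
      · intro j hj
        interval_cases j
        norm_num
      · intro j hj
        interval_cases j
        simp only [Nat.cast_zero, Nat.cast_one, zero_add]
        constructor
        · exact (contDiff_const.prodMk (contDiff_const.mul contDiff_id)).contDiffOn
        · intro s hs
          have : derivWithin γ₀ (Set.Icc (0:ℝ) 1) s = ((0:ℝ), (4:ℝ)) :=
            ((hd s).hasDerivWithinAt).derivWithin (uniqueDiffOn_Icc one_pos s hs)
          rw [this]
          simp [FDTimelike]
    have hlen : Llen γ₀ = 4 := by
      have heq : (fun s => Real.sqrt ((deriv γ₀ s).2 ^ 2 - (deriv γ₀ s).1 ^ 2)) =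
          fun _ : ℝ => (4:ℝ) := by
        funext s
        rw [(hd s).deriv]
        norm_num
      rw [Llen, heq]
      simp
    calc (4 : ℝ≥0∞) = ENNReal.ofReal (Llen γ₀) := by rw [hlen]; norm_num
      _ ≤ LorDist Mslit ((0:ℝ), (0:ℝ)) ((0:ℝ), (4:ℝ)) := le_iSup₂_of_le γ₀ hcurve le_rfl
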